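/- Let γ = (r₁e_{i₁}) * ⋯ * (r_n e_{i_n}) be an axis path in ℝ^d with all r_k ≠ 0 and i_k ≠ i_{k+1} for k = 1,…,n−1, and let w* = (i₁,…,i_n). Then for every square free word w′ with |w′| ≥ n and w′ ≠ w*, the signature coefficient C_γ(w′) = 0. In other words, w* is the unique longest square free word at which the signature coefficient of γ is nonzero. -/

import Mathlib

open MeasureTheory

/-- The signature coefficient of a path with (a.e.) derivative `D` over the time
interval `[s, t]`, at the word given as a list of letters in `Fin d`. -/
noncomputable def sigCoeff {d : ℕ} (D : ℝ → Fin d → ℝ) : List (Fin d) → ℝ → ℝ → ℝ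
  | [], _, _ => 1
  | j :: w, s, t => ∫ u in s..t, D u j * sigCoeff D w u t

/-- The derivative of the axis path `(r₁ e_{i₁}) * ⋯ * (r_n e_{i_n})` parametrized on
`[0, n]`: on the interval `(k-1, k)` it equals `r_k e_{i_k}`. -/
noncomputable def axisDeriv {d n : ℕ} (r : Fin n → ℝ) (i : Fin n → Fin d) (u : ℝ)
    (j : Fin d) : ℝ :=
  ∑ k : Fin n, if (k : ℝ) < u ∧ u < (k : ℝ) + 1 ∧ i k = j then r k else 0

lemma axisDeriv_intervalIntegrable {d n : ℕ} (r : Fin n → ℝ) (i : Fin n → Fin d)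
    (a b : ℝ) (j : Fin d) :
    IntervalIntegrable (fun u => axisDeriv r i u j) volume a b := by
  have : (fun u => axisDeriv r i u j) =
      ∑ k : Fin n, (Set.Ioo ((k:ℕ):ℝ) ((k:ℕ)+1)).indicator
        (fun _ => if i k = j then r k else 0) := by
    funext u
    rw [Finset.sum_apply]
    unfold axisDeriv
    refine Finset.sum_congr rfl fun k _ => ?_
    by_cases h : u ∈ Set.Ioo ((k:ℕ):ℝ) ((k:ℕ)+1)
    · rw [Set.indicator_of_mem h]
      obtain ⟨h1, h2⟩ := h
      by_cases hij : i k = j <;> simp [h1, h2, hij]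
    · rw [Set.indicator_of_notMem h]
      rw [Set.mem_Ioo, not_and_or] at h
      rcases h with h | h <;> simp [h]
  rw [this]
  refine IntervalIntegrable.sum _ fun k _ => ?_
  rw [intervalIntegrable_iff]
  apply (integrable_indicator_iff measurableSet_Ioo).2
  apply (integrableOn_const_iff).2
  right
  exact lt_of_le_of_lt (Measure.restrict_apply_le _ _)
    (by rw [Real.volume_Ioo]; exact ENNReal.ofReal_lt_top)

lemma sigCoeff_cont {d : ℕ} {D : ℝ → Fin d → ℝ}
    (hD : ∀ a b j, IntervalIntegrable (fun u => D u j) volume a b)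
    (w : List (Fin d)) (t : ℝ) : Continuous (fun s => sigCoeff D w s t) := by
  induction w generalizing t with
  | nil => simpa [sigCoeff] using continuous_const
  | cons j w ih =>
    have hint : ∀ a b, IntervalIntegrable (fun u => D u j * sigCoeff D w u t) volume a b :=
      fun a b => (hD a b j).mul_continuousOn (ih t).continuousOn
    have h1 : Continuous fun s => ∫ u in t..s, D u j * sigCoeff D w u t :=
      intervalIntegral.continuous_primitive hint t
    have h2 := h1.neg
    simp only [sigCoeff]
    convert h2 using 2 with s
    rw [intervalIntegral.integral_symm]
    rfl

lemma sigCoeff_integrand_int {d : ℕ} {D : ℝ → Fin d → ℝ}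
    (hD : ∀ a b j, IntervalIntegrable (fun u => D u j) volume a b)
    (w : List (Fin d)) (j : Fin d) (t a b : ℝ) :
    IntervalIntegrable (fun u => D u j * sigCoeff D w u t) volume a b :=
  (hD a b j).mul_continuousOn (sigCoeff_cont hD w t).continuousOn

lemma sigCoeff_congr {d : ℕ} {D₁ D₂ : ℝ → Fin d → ℝ} {a b : ℝ}
    (h : ∀ u ∈ Set.Ioo a b, D₁ u = D₂ u) (w : List (Fin d)) :
    ∀ u, a ≤ u → u ≤ b → sigCoeff D₁ w u b = sigCoeff D₂ w u b := by
  induction w with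
  | nil => simp [sigCoeff]
  | cons j w ih =>
    intro u hau hub
    simp only [sigCoeff]
    apply intervalIntegral.integral_congr_ae
    have hb : ∀ᵐ v : ℝ, v ≠ b := by
      refine ae_iff.2 ?_
      simp [measure_singleton]
    filter_upwards [hb] with v hv hmem
    rw [Set.uIoc_of_le hub] at hmem
    have hvIoo : v ∈ Set.Ioo a b := ⟨lt_of_le_of_lt hau hmem.1, lt_of_le_of_ne hmem.2 hv⟩
    rw [h v hvIoo, ih v (le_of_lt hvIoo.1) hmem.2]

lemma sigCoeff_chen {d : ℕ} {D : ℝ → Fin d → ℝ}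
    (hD : ∀ a b j, IntervalIntegrable (fun u => D u j) volume a b)
    (w : List (Fin d)) (m b : ℝ) (hmb : m ≤ b) :
    ∀ a, a ≤ m → sigCoeff D w a b = ∑ p ∈ Finset.range (w.length + 1),
      sigCoeff D (w.take p) a m * sigCoeff D (w.drop p) m b := by
  induction w with
  | nil => intro a _; simp [sigCoeff]
  | cons j w ih =>
    intro a ham
    have hsplit := intervalIntegral.integral_add_adjacent_intervals
      (sigCoeff_integrand_int hD w j b a m) (sigCoeff_integrand_int hD w j b m b)
    have hLHS : sigCoeff D (j :: w) a b =
        (∫ u in a..m, D u j * sigCoeff D w u b) + sigCoeff D (j :: w) m b := by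
      simp only [sigCoeff]
      rw [hsplit]
    rw [hLHS]
    have heq : Set.EqOn (fun u => D u j * sigCoeff D w u b)
        (fun u => ∑ q ∈ Finset.range (w.length + 1),
          (D u j * sigCoeff D (w.take q) u m) * sigCoeff D (w.drop q) m b)
        (Set.uIcc a m) := by
      intro u hu
      rw [Set.uIcc_of_le ham] at hu
      dsimp only
      rw [ih u hu.2, Finset.mul_sum]
      simp only [mul_assoc]
    rw [intervalIntegral.integral_congr heq, intervalIntegral.integral_finset_sum
      (fun q _ => ((sigCoeff_integrand_int hD (w.take q) j m a m).mul_const _))]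
    have key : ∀ q, (∫ u in a..m, (D u j * sigCoeff D (w.take q) u m) * sigCoeff D (w.drop q) m b)
        = sigCoeff D (j :: w.take q) a m * sigCoeff D (w.drop q) m b := by
      intro q
      rw [intervalIntegral.integral_mul_const]
      simp only [sigCoeff]
    conv_rhs => rw [List.length_cons, Finset.sum_range_succ']
    simp only [List.take_succ_cons, List.drop_succ_cons, List.take_zero, List.drop_zero]
    have h0 : sigCoeff D ([] : List (Fin d)) a m = 1 := by simp [sigCoeff]
    rw [h0, one_mul]
    congr 1
    exact Finset.sum_congr rfl fun q _ => key q

lemma sigCoeff_const {d : ℕ} (c : Fin d → ℝ) (w : List (Fin d)) :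
    ∀ a b : ℝ, sigCoeff (fun _ => c) w a b =
      (w.map c).prod * (b - a) ^ w.length / (Nat.factorial w.length) := by
  induction w with
  | nil => intro a b; simp [sigCoeff]
  | cons j w ih =>
    intro a b
    simp only [sigCoeff]
    have heq : Set.EqOn (fun u => c j * sigCoeff (fun _ => c) w u b)
        (fun u => (c j * ((w.map c).prod / (Nat.factorial w.length))) * (b - u) ^ w.length)
        (Set.uIcc a b) := by
      intro u _
      dsimp only
      rw [ih u b]
      ring
    rw [intervalIntegral.integral_congr heq, intervalIntegral.integral_const_mul]
    have hpow : (∫ u in a..b, (b - u) ^ w.length) = (b - a) ^ (w.length + 1) / (w.length + 1) := by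
      rw [intervalIntegral.integral_comp_sub_left (fun x => x ^ w.length) b]
      rw [sub_self, integral_pow, zero_pow (Nat.succ_ne_zero _)]
      ring_nf
    rw [hpow]
    rw [List.map_cons, List.prod_cons, List.length_cons, Nat.factorial_succ]
    have h1 : ((Nat.factorial w.length) : ℝ) ≠ 0 := Nat.cast_ne_zero.2 (Nat.factorial_ne_zero _)
    have h2 : ((w.length : ℝ) + 1) ≠ 0 := by positivity
    field_simp
    push_cast; ring

lemma axisDeriv_init {d n : ℕ} (r : Fin (n + 1) → ℝ) (i : Fin (n + 1) → Fin d)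
    (u : ℝ) (hu : u ≤ n) :
    axisDeriv r i u = axisDeriv (fun k => r k.castSucc) (fun k => i k.castSucc) u := by
  funext j
  unfold axisDeriv
  rw [Fin.sum_univ_castSucc]
  have : ¬ ((↑(Fin.last n) : ℝ) < u ∧ u < (↑(Fin.last n) : ℝ) + 1 ∧ i (Fin.last n) = j) := by
    rw [Fin.val_last]
    exact fun h => absurd h.1 (not_lt.2 hu)
  rw [if_neg this, add_zero]
  refine Finset.sum_congr rfl fun k _ => ?_
  rw [Fin.coe_castSucc]

lemma axisDeriv_last {d n : ℕ} (r : Fin (n + 1) → ℝ) (i : Fin (n + 1) → Fin d)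
    (u : ℝ) (hu : u ∈ Set.Ioo (n : ℝ) ((n : ℝ) + 1)) :
    axisDeriv r i u = fun j => if i (Fin.last n) = j then r (Fin.last n) else 0 := by
  funext j
  unfold axisDeriv
  rw [Fin.sum_univ_castSucc]
  have hz : ∀ k : Fin n, (if ((k.castSucc : Fin (n+1)) : ℝ) < u ∧
      u < ((k.castSucc : Fin (n+1)) : ℝ) + 1 ∧ i k.castSucc = j then r k.castSucc else 0) = 0 := by
    intro k
    rw [if_neg]
    rintro ⟨_, h2, _⟩
    have hk : (k : ℝ) + 1 ≤ (n : ℝ) := by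
      have := k.isLt
      push_cast
      exact_mod_cast Nat.succ_le_of_lt this
    rw [Fin.coe_castSucc] at h2
    exact absurd (lt_of_lt_of_le h2 hk) (not_lt.2 (le_of_lt hu.1))
  rw [Finset.sum_congr rfl (fun k _ => hz k), Finset.sum_const_zero, zero_add, Fin.val_last]
  by_cases hij : i (Fin.last n) = j
  · rw [if_pos ⟨hu.1, hu.2, hij⟩, if_pos hij]
  · rw [if_neg (fun h => hij h.2.2), if_neg hij]

lemma sigCoeff_axis_vanish {d : ℕ} : ∀ (n : ℕ) (r : Fin n → ℝ) (i : Fin n → Fin d)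
    (w : List (Fin d)), w.Chain' (· ≠ ·) → n ≤ w.length → w ≠ List.ofFn i →
    sigCoeff (axisDeriv r i) w 0 (n : ℝ) = 0 := by
  intro n
  induction n with
  | zero =>
    intro r i w _ _ hne
    match w with
    | [] => exact absurd (by simp) hne
    | j :: w =>
      simp only [sigCoeff, Nat.cast_zero]
      exact intervalIntegral.integral_same
  | succ n ih =>
    intro r i w hsf hlen hne
    have hD := axisDeriv_intervalIntegrable r i
    have h0n : (0:ℝ) ≤ n := Nat.cast_nonneg n
    have hn1 : (n:ℝ) ≤ (n:ℝ) + 1 := by linarith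
    have hcast : ((n + 1 : ℕ) : ℝ) = (n:ℝ) + 1 := by push_cast; ring
    rw [hcast, sigCoeff_chen hD w (n:ℝ) ((n:ℝ) + 1) hn1 0 h0n]
    apply Finset.sum_eq_zero
    intro p hp
    rw [Finset.mem_range] at hp
    have hple : p ≤ w.length := Nat.lt_succ_iff.mp hp
    set c : Fin d → ℝ := fun j => if i (Fin.last n) = j then r (Fin.last n) else 0 with hc
    have hlastseg : sigCoeff (axisDeriv r i) (w.drop p) (n:ℝ) ((n:ℝ) + 1)
        = ((w.drop p).map c).prod / (Nat.factorial (w.drop p).length) := by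
      rw [sigCoeff_congr (D₂ := fun _ => c) (fun u hu => axisDeriv_last r i u hu)
        (w.drop p) (n:ℝ) le_rfl hn1, sigCoeff_const, add_sub_cancel_left, one_pow, mul_one]
    have hinitseg : sigCoeff (axisDeriv r i) (w.take p) 0 (n:ℝ)
        = sigCoeff (axisDeriv (fun k => r k.castSucc) (fun k => i k.castSucc)) (w.take p) 0 (n:ℝ) :=
      sigCoeff_congr (fun u hu => axisDeriv_init r i u hu.2.le) (w.take p) 0 le_rfl h0n
    by_cases hbig : 2 ≤ w.length - p
    · -- the dropped part has at least two letters, two adjacent differ, so its factor vanishes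
      rw [hlastseg]
      have hlen2 : 2 ≤ (w.drop p).length := by rw [List.length_drop]; exact hbig
      have hchain : (w.drop p).Chain' (· ≠ ·) := hsf.drop p
      obtain ⟨x, b', hb⟩ := List.exists_cons_of_ne_nil (l := w.drop p) (by
        intro h; rw [h] at hlen2; simp at hlen2)
      obtain ⟨y, t, hb'⟩ := List.exists_cons_of_ne_nil (l := b') (by
        intro h; rw [h] at hb; rw [hb] at hlen2; simp at hlen2)
      subst hb'
      rw [hb] at hchain
      have hxy : x ≠ y := (List.isChain_cons_cons.1 hchain).1
      have hprod : ((w.drop p).map c).prod = 0 := by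
        rw [hb]
        simp only [List.map_cons, List.prod_cons]
        by_cases h1 : i (Fin.last n) = x
        · have h2 : c y = 0 := by
            rw [hc]
            simp only
            rw [if_neg (fun h => hxy (h1.symm.trans h))]
          rw [h2]; ring
        · have h2 : c x = 0 := by rw [hc]; simp only; rw [if_neg h1]
          rw [h2]; ring
      rw [hprod]
      simp
    · have hpn : n ≤ p := by omega
      by_cases hpeq : p = n
      · subst hpeq
        by_cases hofn : w.take p = List.ofFn (fun k => i k.castSucc)
        · have hlendrop : (w.drop p).length = 1 := by rw [List.length_drop]; omega
          obtain ⟨x, hx⟩ := List.length_eq_one_iff.mp hlendrop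
          by_cases hxi : i (Fin.last p) = x
          · exfalso
            apply hne
            have hw : w = w.take p ++ w.drop p := (List.take_append_drop p w).symm
            rw [hw, hofn, hx, ← hxi, List.ofFn_succ']
            rw [List.concat_eq_append]
          · rw [hlastseg, hx]
            have : c x = 0 := by rw [hc]; simp only; rw [if_neg hxi]
            simp [this]
        · rw [hinitseg, ih _ _ (w.take p) (hsf.take p)
            (by rw [List.length_take]; omega) hofn, zero_mul]
      · have hplt : n < p := lt_of_le_of_ne hpn (Ne.symm hpeq)
        have hnof : w.take p ≠ List.ofFn (fun k => i k.castSucc) := by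
          intro h
          have := congrArg List.length h
          rw [List.length_take, List.length_ofFn] at this
          omega
        rw [hinitseg, ih _ _ (w.take p) (hsf.take p)
          (by rw [List.length_take]; omega) hnof, zero_mul]

/-- For the axis path `(r₁ e_{i₁}) * ⋯ * (r_n e_{i_n})` (with all `r_k ≠ 0` and adjacent
directions distinct), every square free word `w'` of length at least `n` other than
`w* = (i₁, …, i_n)` has vanishing signature coefficient: `w*` is the unique longest
square free word with nonzero coefficient. -/
theorem axis_path_coeff_square_free_vanish
    {d n : ℕ} (hd : 0 < d) (hn : 0 < n) (r : Fin n → ℝ) (i : Fin n → Fin d)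
    (hr : ∀ k, r k ≠ 0)
    (hi : ∀ (k : ℕ) (h : k + 1 < n), i ⟨k, by omega⟩ ≠ i ⟨k + 1, h⟩)
    (w' : List (Fin d)) (hsf : w'.Chain' (· ≠ ·)) (hlen : n ≤ w'.length)
    (hne : w' ≠ List.ofFn i) :
    sigCoeff (axisDeriv r i) w' 0 n = 0 :=
  sigCoeff_axis_vanish n r i w' hsf hlen hne
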